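/- Let X be a locally compact Hausdorff space with a continuous 𝕋-action, t₀ ∈ X with 𝕋t₀ ∩ {t₀} = {t₀} under the action (i.e. λt₀ = t₀ only for λ = 1), and W a 𝕋-invariant open neighbourhood of t₀ contained in a compact 𝕋-invariant set. Then there exists h ∈ C₀^𝕋(X) with ‖h‖ = 1, h(t₀) = 1 and h(t) = 0 for all t ∈ X∖W. -/

import Mathlib

open scoped ZeroAtInfty
open MeasureTheory Filter Function

noncomputable instance : MeasurableSpace Circle := borel Circle
instance : BorelSpace Circle := ⟨rfl⟩

theorem stmt11 {X : Type*} [TopologicalSpace X] [LocallyCompactSpace X] [T2Space X]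
    [MulAction Circle X] [ContinuousSMul Circle X]
    (t₀ : X) (hfree : ∀ l : Circle, l • t₀ = t₀ → l = 1)
    (W : Set X) (hW : IsOpen W) (ht₀W : t₀ ∈ W)
    (hWinv : ∀ (l : Circle), ∀ t ∈ W, l • t ∈ W)
    (K : Set X) (hK : IsCompact K) (hKinv : ∀ (l : Circle), ∀ t ∈ K, l • t ∈ K)
    (hWK : W ⊆ K) :
    ∃ h : C₀(X, ℂ), (∀ (l : Circle) (t : X), h (l • t) = (l : ℂ) * h t) ∧
      ‖h‖ = 1 ∧ h t₀ = 1 ∧ ∀ t ∉ W, h t = 0 := by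
  -- Urysohn function u : 1 at t₀, 0 off W
  obtain ⟨u, hu1, hu0, hucs, hu01⟩ :=
    exists_continuous_one_zero_of_isCompact (isCompact_singleton (x := t₀))
      hW.isClosed_compl
      (Set.disjoint_singleton_left.mpr (by simp [ht₀W]))
  -- Tietze extension g of l • t₀ ↦ l, via the one-point compactification
  have he_cont : Continuous (fun l : Circle => ((l • t₀ : X) : OnePoint X)) :=
    OnePoint.continuous_coe.comp (continuous_id.smul continuous_const)
  have he_inj : Function.Injective (fun l : Circle => ((l • t₀ : X) : OnePoint X)) := by
    intro a b hab
    have hab' : a • t₀ = b • t₀ := OnePoint.coe_injective hab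
    have := hfree (b⁻¹ * a) (by rw [mul_smul, hab', inv_smul_smul])
    exact (inv_mul_eq_one.mp this).symm
  obtain ⟨G, hG⟩ := ContinuousMap.exists_extension' (he_cont.isClosedEmbedding he_inj)
      ⟨fun l : Circle => (l : ℂ), continuous_subtype_val⟩
  set g : X → ℂ := fun t => G (t : OnePoint X) with hgdef
  have hg_cont : Continuous g := G.continuous.comp OnePoint.continuous_coe
  have hg_orbit : ∀ l : Circle, g (l • t₀) = (l : ℂ) := fun l => congrFun hG l
  set v : X → ℂ := fun t => (u t : ℂ) * g t with hvdef
  have hv_cont : Continuous v := (Complex.continuous_ofReal.comp u.continuous).mul hg_cont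
  have hvW : ∀ t ∉ W, v t = 0 := by
    intro t ht
    have : u t = 0 := hu0 ht
    simp [hvdef, this]
  -- the averaged function F
  set F : X → ℂ := fun t => ∫ x : Circle, ((x⁻¹ : Circle) : ℂ) * v (x • t) ∂Measure.haar
    with hFdef
  have hcoeC : Continuous fun x : Circle => (x : ℂ) := continuous_subtype_val
  have hinvC : Continuous fun x : Circle => ((x⁻¹ : Circle) : ℂ) :=
    hcoeC.comp (continuous_inv (G := Circle))
  have hInt : ∀ t : X, Continuous fun x : Circle => ((x⁻¹ : Circle) : ℂ) * v (x • t) := by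
    intro t
    exact hinvC.mul (hv_cont.comp ((continuous_id (X := Circle)).smul continuous_const))
  have hIntg : ∀ t, Integrable (fun x : Circle => ((x⁻¹ : Circle) : ℂ) * v (x • t))
      Measure.haar := fun t =>
    (hInt t).integrable_of_hasCompactSupport (HasCompactSupport.of_compactSpace _)
  -- equivariance of F
  have hFeq : ∀ (l : Circle) (t : X), F (l • t) = (l : ℂ) * F t := by
    intro l t
    have h1 : F (l • t) = ∫ x : Circle, ((l * x⁻¹ : Circle) : ℂ) * v (x • t) ∂Measure.haar := by
      rw [← integral_mul_right_eq_self
        (fun y : Circle => ((l * y⁻¹ : Circle) : ℂ) * v (y • t)) l]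
      simp only [hFdef]
      refine integral_congr_ae (Eventually.of_forall fun x => ?_)
      simp [mul_smul, mul_inv_rev, mul_inv_cancel_left]
    rw [h1]
    simp_rw [Circle.coe_mul, mul_assoc]
    rw [integral_const_mul]
  -- F vanishes off W
  have hF0 : ∀ t ∉ W, F t = 0 := by
    intro t ht
    have hz : ∀ x : Circle, v (x • t) = 0 := by
      intro x
      refine hvW _ fun hmem => ht ?_
      have := hWinv x⁻¹ _ hmem
      rwa [inv_smul_smul] at this
    simp only [hFdef, hz, mul_zero, integral_zero]
  -- the positive constant c
  have hc_cont : Continuous fun x : Circle => u (x • t₀) :=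
    u.continuous.comp (continuous_id.smul continuous_const)
  have hcInt : Integrable (fun x : Circle => u (x • t₀)) Measure.haar :=
    hc_cont.integrable_of_hasCompactSupport (HasCompactSupport.of_compactSpace _)
  set c : ℝ := ∫ x : Circle, u (x • t₀) ∂Measure.haar with hcdef
  have hut₀ : u t₀ = 1 := hu1 rfl
  have hcpos : 0 < c := by
    rw [hcdef, integral_pos_iff_support_of_nonneg (fun x => (hu01 _).1) hcInt]
    have hopen : IsOpen (Function.support fun x : Circle => u (x • t₀)) := by
      rw [Function.support_eq_preimage]
      exact (isOpen_compl_singleton).preimage hc_cont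
    refine hopen.measure_pos _ ⟨1, ?_⟩
    simp [Function.mem_support, one_smul, hut₀]
  -- F t₀ = c
  have hFt₀ : F t₀ = (c : ℂ) := by
    simp only [hFdef, hcdef]
    calc (∫ x : Circle, ((x⁻¹ : Circle) : ℂ) * v (x • t₀) ∂Measure.haar)
        = ∫ x : Circle, ((u (x • t₀) : ℝ) : ℂ) ∂Measure.haar := by
          refine integral_congr_ae (Eventually.of_forall fun x => ?_)
          simp only [hvdef, hg_orbit x]
          rw [Circle.coe_inv, mul_comm ((u (x • t₀) : ℂ)) (x : ℂ), ← mul_assoc,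
            inv_mul_cancel₀ (Circle.coe_ne_zero x), one_mul]
      _ = (((∫ x : Circle, u (x • t₀) ∂Measure.haar : ℝ)) : ℂ) := integral_ofReal
  -- continuity of F
  have hFcont : Continuous F := by
    have hΦ : Continuous fun p : X × Circle => ((p.2⁻¹ : Circle) : ℂ) * v (p.2 • p.1) :=
      (hinvC.comp (continuous_snd (X := X) (Y := Circle))).mul
        (hv_cont.comp ((continuous_snd (X := X) (Y := Circle)).smul continuous_fst))
    set Φ : C(X × Circle, ℂ) := ⟨_, hΦ⟩ with hΦdef
    have hI : Continuous fun f : C(Circle, ℂ) => ∫ x, f x ∂(Measure.haar : Measure Circle) := by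
      have hlip : LipschitzWith ((Measure.haar : Measure Circle) Set.univ).toNNReal
          fun f : C(Circle, ℂ) => ∫ x, f x ∂(Measure.haar : Measure Circle) := by
        refine LipschitzWith.of_dist_le_mul fun f g => ?_
        have hif : Integrable (⇑f) (Measure.haar : Measure Circle) :=
          f.continuous.integrable_of_hasCompactSupport (HasCompactSupport.of_compactSpace _)
        have hig : Integrable (⇑g) (Measure.haar : Measure Circle) :=
          g.continuous.integrable_of_hasCompactSupport (HasCompactSupport.of_compactSpace _)
        rw [dist_eq_norm, ← integral_sub hif hig]
        have hb : ∀ᵐ x ∂(Measure.haar : Measure Circle), ‖f x - g x‖ ≤ dist f g :=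
          Eventually.of_forall fun x => by
            rw [← dist_eq_norm]; exact ContinuousMap.dist_apply_le_dist x
        calc ‖∫ x, (f x - g x) ∂(Measure.haar : Measure Circle)‖
            ≤ dist f g * ((Measure.haar : Measure Circle) Set.univ).toReal :=
              norm_integral_le_of_norm_le_const hb
          _ = (((Measure.haar : Measure Circle) Set.univ).toNNReal : ℝ) * dist f g := by
              rw [mul_comm]; rfl
      exact hlip.continuous
    have : Continuous fun t : X => ∫ x : Circle, (Φ.curry t) x ∂(Measure.haar : Measure Circle) :=
      hI.comp Φ.curry.continuous
    refine this.congr fun t => ?_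
    simp only [hFdef, ContinuousMap.curry_apply, hΦdef, ContinuousMap.coe_mk]
  -- the normalising denominator
  set m : X → ℝ := fun t => max ‖F t‖ c with hmdef
  have hm_pos : ∀ t, 0 < m t := fun t => lt_max_of_lt_right hcpos
  have hm_cont : Continuous m := hFcont.norm.max continuous_const
  have hmeq : ∀ (l : Circle) (t : X), m (l • t) = m t := by
    intro l t
    simp only [hmdef, hFeq l t, norm_mul]
    rw [show ‖(l : ℂ)‖ = 1 from Circle.norm_coe l, one_mul]
  -- the function h
  set h0 : X → ℂ := fun t => F t / (m t : ℂ) with hh0def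
  have hh0_cont : Continuous h0 :=
    hFcont.div (Complex.continuous_ofReal.comp hm_cont)
      (fun t => Complex.ofReal_ne_zero.mpr (hm_pos t).ne')
  have hh0W : ∀ t ∉ W, h0 t = 0 := fun t ht => by simp [hh0def, hF0 t ht]
  have hcs : HasCompactSupport h0 :=
    HasCompactSupport.intro hK fun t ht => hh0W t fun hw => ht (hWK hw)
  have hmt₀ : m t₀ = c := by
    simp only [hmdef, hFt₀]
    rw [Complex.norm_real, Real.norm_eq_abs, abs_of_pos hcpos, max_self]
  have hh0t₀ : h0 t₀ = 1 := by
    simp only [hh0def, hFt₀, hmt₀]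
    exact div_self (Complex.ofReal_ne_zero.mpr hcpos.ne')
  have hh0eq : ∀ (l : Circle) (t : X), h0 (l • t) = (l : ℂ) * h0 t := by
    intro l t
    simp only [hh0def, hFeq l t, hmeq l t, mul_div_assoc]
  have hbound : ∀ t, ‖h0 t‖ ≤ 1 := by
    intro t
    rw [hh0def]
    simp only [norm_div, Complex.norm_real, Real.norm_eq_abs, abs_of_pos (hm_pos t)]
    rw [div_le_one (hm_pos t)]
    exact le_max_left _ _
  refine ⟨⟨⟨h0, hh0_cont⟩, hcs.is_zero_at_infty⟩, hh0eq, ?_, hh0t₀, hh0W⟩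
  set h : C₀(X, ℂ) := ⟨⟨h0, hh0_cont⟩, hcs.is_zero_at_infty⟩ with hhdef
  refine le_antisymm ?_ ?_
  · rw [← ZeroAtInftyContinuousMap.norm_toBCF_eq_norm]
    exact (BoundedContinuousFunction.norm_le zero_le_one).mpr hbound
  · have h1 : ‖h t₀‖ ≤ ‖h‖ := by
      rw [← ZeroAtInftyContinuousMap.norm_toBCF_eq_norm]
      exact BoundedContinuousFunction.norm_coe_le_norm h.toBCF t₀
    simpa [hhdef, hh0t₀] using h1
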